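/- For bounded linear operators A, B, X, Y on a complex Hilbert space, the numerical radius of the 2×2 block operator matrix with zero diagonal, (1,2)-entry AXB*, and (2,1)-entry BYA*, is at most max{‖A‖², ‖B‖²} times the numerical radius of the block operator matrix with zero diagonal, (1,2)-entry X and (2,1)-entry Y. -/

import Mathlib

open scoped InnerProductSpace
open ContinuousLinearMap Metric

/-- The numerical radius of a bounded operator on a complex Hilbert space. -/
noncomputable def numRadius {H : Type*} [NormedAddCommGroup H] [InnerProductSpace ℂ H]
    (T : H →L[ℂ] H) : ℝ :=
  sSup {r : ℝ | ∃ x : H, ‖x‖ = 1 ∧ r = ‖(inner ℂ (T x) x : ℂ)‖}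

/-- The block operator `[[0, X], [Y, 0]]` acting on `H ⊕ H` (with the `ℓ²` Hilbert space
structure) by `(x, y) ↦ (X y, Y x)`. -/
noncomputable def blockOp {H : Type*} [NormedAddCommGroup H] [InnerProductSpace ℂ H]
    (X Y : H →L[ℂ] H) : WithLp 2 (H × H) →L[ℂ] WithLp 2 (H × H) :=
  ((WithLp.prodContinuousLinearEquiv 2 ℂ H H).symm.toContinuousLinearMap) ∘L
    ((X ∘L ContinuousLinearMap.snd ℂ H H).prod (Y ∘L ContinuousLinearMap.fst ℂ H H)) ∘L
    ((WithLp.prodContinuousLinearEquiv 2 ℂ H H).toContinuousLinearMap)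

/-- `A` is a `G₁` operator: `‖(z - A)⁻¹‖ = 1 / dist (z, σ(A))` for all `z ∉ σ(A)`. -/
def IsG1 {H : Type*} [NormedAddCommGroup H] [InnerProductSpace ℂ H] [CompleteSpace H]
    (A : H →L[ℂ] H) : Prop :=
  ∀ z : ℂ, z ∉ spectrum ℂ A →
    ‖Ring.inverse (algebraMap ℂ (H →L[ℂ] H) z - A)‖ = 1 / Metric.infDist z (spectrum ℂ A)

/-- The distance between two subsets of `ℂ`. -/
noncomputable def setDist (s t : Set ℂ) : ℝ :=
  sInf {d : ℝ | ∃ z ∈ s, ∃ w ∈ t, d = dist z w}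

/-- The Riesz–Dunford functional calculus `f(A)` for `f` analytic on the unit disk and
`σ(A) ⊂ 𝔻`, realized through the Taylor expansion of `f` at `0`. -/
noncomputable def dunford {H : Type*} [NormedAddCommGroup H] [InnerProductSpace ℂ H]
    [CompleteSpace H] (f : ℂ → ℂ) (A : H →L[ℂ] H) : H →L[ℂ] H :=
  ∑' n : ℕ, (iteratedDeriv n f 0 / n.factorial) • A ^ n

/-- The modulus `|C| = (C*C)^{1/2}` of a bounded operator. -/
noncomputable def opAbs {H : Type*} [NormedAddCommGroup H] [InnerProductSpace ℂ H]
    [CompleteSpace H] (C : H →L[ℂ] H) : H →L[ℂ] H :=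
  CFC.sqrt (ContinuousLinearMap.adjoint C * C)

section aux
variable {H : Type*} [NormedAddCommGroup H] [InnerProductSpace ℂ H]

lemma blockOp_fst (X Y : H →L[ℂ] H) (z : WithLp 2 (H × H)) :
    (blockOp X Y z).fst = X z.snd := rfl

lemma blockOp_snd (X Y : H →L[ℂ] H) (z : WithLp 2 (H × H)) :
    (blockOp X Y z).snd = Y z.fst := rfl

lemma numRadius_bdd (T : H →L[ℂ] H) :
    BddAbove {r : ℝ | ∃ x : H, ‖x‖ = 1 ∧ r = ‖(inner ℂ (T x) x : ℂ)‖} := by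
  refine ⟨‖T‖, ?_⟩
  rintro r ⟨x, hx, rfl⟩
  calc ‖(inner ℂ (T x) x : ℂ)‖ ≤ ‖T x‖ * ‖x‖ := norm_inner_le_norm _ _
    _ ≤ ‖T‖ * ‖x‖ * ‖x‖ := by
        have := T.le_opNorm x
        nlinarith [norm_nonneg x, norm_nonneg (T x)]
    _ = ‖T‖ := by rw [hx]; ring

lemma numRadius_nonneg (T : H →L[ℂ] H) : 0 ≤ numRadius T :=
  Real.sSup_nonneg (by rintro r ⟨x, hx, rfl⟩; positivity)

lemma inner_le_numRadius (T : H →L[ℂ] H) (z : H) :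
    ‖(inner ℂ (T z) z : ℂ)‖ ≤ numRadius T * ‖z‖ ^ 2 := by
  rcases eq_or_ne z 0 with rfl | hz
  · simp
  · have hnz : ‖z‖ ≠ 0 := norm_ne_zero_iff.mpr hz
    set x : H := ((‖z‖ : ℂ))⁻¹ • z with hxdef
    have hx : ‖x‖ = 1 := by
      rw [hxdef, norm_smul, norm_inv, Complex.norm_real, norm_norm]
      field_simp
    have hmem : ‖(inner ℂ (T x) x : ℂ)‖ ∈
        {r : ℝ | ∃ x : H, ‖x‖ = 1 ∧ r = ‖(inner ℂ (T x) x : ℂ)‖} := ⟨x, hx, rfl⟩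
    have hle : ‖(inner ℂ (T x) x : ℂ)‖ ≤ numRadius T := le_csSup (numRadius_bdd T) hmem
    have hval : ‖(inner ℂ (T x) x : ℂ)‖ = ‖z‖⁻¹ ^ 2 * ‖(inner ℂ (T z) z : ℂ)‖ := by
      rw [hxdef]
      simp only [map_smul, inner_smul_left, inner_smul_right, norm_mul, RCLike.norm_conj,
        norm_inv, Complex.norm_real, norm_norm]
      ring
    rw [hval] at hle
    have h2 : (0:ℝ) < ‖z‖ ^ 2 := by positivity
    calc ‖(inner ℂ (T z) z : ℂ)‖ = ‖z‖ ^ 2 * (‖z‖⁻¹ ^ 2 * ‖(inner ℂ (T z) z : ℂ)‖) := by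
          field_simp
      _ ≤ ‖z‖ ^ 2 * numRadius T := by
          exact mul_le_mul_of_nonneg_left hle (le_of_lt h2)
      _ = numRadius T * ‖z‖ ^ 2 := mul_comm _ _

end aux

theorem stmt4 {H : Type*} [NormedAddCommGroup H] [InnerProductSpace ℂ H] [CompleteSpace H] (A B X Y : H →L[ℂ] H) :
    numRadius (blockOp (A * X * ContinuousLinearMap.adjoint B)
        (B * Y * ContinuousLinearMap.adjoint A)) ≤
      max (‖A‖ ^ 2) (‖B‖ ^ 2) * numRadius (blockOp X Y) := by
  have hM : (0:ℝ) ≤ max (‖A‖ ^ 2) (‖B‖ ^ 2) := le_max_of_le_left (by positivity)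
  have hw := numRadius_nonneg (blockOp X Y)
  apply Real.sSup_le _ (by positivity)
  rintro r ⟨z, hz, rfl⟩
  set u := z.fst with hu
  set v := z.snd with hv
  set w : WithLp 2 (H × H) :=
    (WithLp.equiv 2 (H × H)).symm (ContinuousLinearMap.adjoint A u,
      ContinuousLinearMap.adjoint B v) with hwdef
  have hwf : w.fst = ContinuousLinearMap.adjoint A u := rfl
  have hws : w.snd = ContinuousLinearMap.adjoint B v := rfl
  have hinner : (inner ℂ ((blockOp (A * X * ContinuousLinearMap.adjoint B)
      (B * Y * ContinuousLinearMap.adjoint A)) z) z : ℂ)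
      = inner ℂ ((blockOp X Y) w) w := by
    rw [WithLp.prod_inner_apply, WithLp.prod_inner_apply]
    change ⟪(blockOp _ _ z).fst, z.fst⟫_ℂ + ⟪(blockOp _ _ z).snd, z.snd⟫_ℂ =
      ⟪(blockOp X Y w).fst, w.fst⟫_ℂ + ⟪(blockOp X Y w).snd, w.snd⟫_ℂ
    rw [blockOp_fst, blockOp_snd,
      blockOp_fst, blockOp_snd, hwf, hws]
    simp only [ContinuousLinearMap.mul_apply]
    rw [← ContinuousLinearMap.adjoint_inner_right A,
      ← ContinuousLinearMap.adjoint_inner_right B]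
  have hwnorm : ‖w‖ ^ 2 ≤ max (‖A‖ ^ 2) (‖B‖ ^ 2) := by
    have h1 : ‖ContinuousLinearMap.adjoint A u‖ ≤ ‖A‖ * ‖u‖ := by
      have h := (ContinuousLinearMap.adjoint A).le_opNorm u
      rwa [ContinuousLinearMap.adjoint.norm_map] at h
    have h2 : ‖ContinuousLinearMap.adjoint B v‖ ≤ ‖B‖ * ‖v‖ := by
      have h := (ContinuousLinearMap.adjoint B).le_opNorm v
      rwa [ContinuousLinearMap.adjoint.norm_map] at h
    have hz2 : ‖u‖ ^ 2 + ‖v‖ ^ 2 = 1 := by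
      have := WithLp.prod_norm_sq_eq_of_L2 z
      rw [hz] at this; simpa using this.symm
    have := WithLp.prod_norm_sq_eq_of_L2 w
    rw [this, hwf, hws]
    have hA : ‖A‖ ^ 2 ≤ max (‖A‖ ^ 2) (‖B‖ ^ 2) := le_max_left _ _
    have hB : ‖B‖ ^ 2 ≤ max (‖A‖ ^ 2) (‖B‖ ^ 2) := le_max_right _ _
    nlinarith [norm_nonneg u, norm_nonneg v, norm_nonneg (ContinuousLinearMap.adjoint A u),
      norm_nonneg (ContinuousLinearMap.adjoint B v), sq_nonneg (‖u‖), sq_nonneg (‖v‖)]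
  calc ‖(inner ℂ ((blockOp (A * X * ContinuousLinearMap.adjoint B)
      (B * Y * ContinuousLinearMap.adjoint A)) z) z : ℂ)‖
      = ‖(inner ℂ ((blockOp X Y) w) w : ℂ)‖ := by rw [hinner]
    _ ≤ numRadius (blockOp X Y) * ‖w‖ ^ 2 := inner_le_numRadius _ _
    _ ≤ numRadius (blockOp X Y) * max (‖A‖ ^ 2) (‖B‖ ^ 2) :=
        mul_le_mul_of_nonneg_left hwnorm hw
    _ = max (‖A‖ ^ 2) (‖B‖ ^ 2) * numRadius (blockOp X Y) := mul_comm _ _
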